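/- Let n ≥ 1 and 1 ≤ l ≤ n be natural numbers, let p be a probability vector on Fin n, and let u > 0 be a real number with ∑_i (p i)² ≤ u and (l : ℝ) ≥ 100 · u · n. Then the fraction of l-element subsets U of Fin n satisfying both ∑_{i ∈ U} p i ≥ l/(2n) and (∑_{i ∈ U} (p i)²) / (∑_{i ∈ U} p i)² ≤ 400 · u · n / l is at least 0.95. -/

import Mathlib

set_option maxHeartbeats 2000000


open scoped Classical

lemma count_supersets {α : Type*} [DecidableEq α] (t s : Finset α) (hst : s ⊆ t) {l : ℕ}
    (hl : s.card ≤ l) :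
    ((Finset.powersetCard l t).filter (fun U => s ⊆ U)).card
      = (t.card - s.card).choose (l - s.card) := by
  rw [← Finset.card_sdiff_of_subset hst, ← Finset.card_powersetCard]
  apply Finset.card_bij' (fun U _ => U \ s) (fun V _ => V ∪ s)
  · intro U hU
    simp only [Finset.mem_filter, Finset.mem_powersetCard] at hU ⊢
    obtain ⟨⟨hUt, hUc⟩, hsU⟩ := hU
    exact ⟨Finset.sdiff_subset_sdiff hUt (le_refl s),
      by rw [Finset.card_sdiff_of_subset hsU, hUc]⟩
  · intro V hV
    simp only [Finset.mem_filter, Finset.mem_powersetCard] at hV ⊢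
    obtain ⟨hVt, hVc⟩ := hV
    have hdisj : Disjoint V s := (Finset.subset_sdiff.mp hVt).2
    refine ⟨⟨Finset.union_subset ((Finset.subset_sdiff.mp hVt).1) hst, ?_⟩,
      Finset.subset_union_right⟩
    rw [Finset.card_union_of_disjoint hdisj, hVc]
    omega
  · intro U hU
    simp only [Finset.mem_filter] at hU
    exact Finset.sdiff_union_of_subset hU.2
  · intro V hV
    simp only [Finset.mem_powersetCard] at hV
    have hdisj : Disjoint V s := (Finset.subset_sdiff.mp hV.1).2
    exact Finset.union_sdiff_cancel_right hdisj

lemma sum_over_subsets {α : Type*} [Fintype α] [DecidableEq α] {l : ℕ} (hl : 1 ≤ l)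
    (f : α → ℝ) :
    ∑ U ∈ Finset.powersetCard l (Finset.univ : Finset α), ∑ i ∈ U, f i
      = ((Fintype.card α - 1).choose (l - 1) : ℝ) * ∑ i, f i := by
  have key : ∀ U ∈ Finset.powersetCard l (Finset.univ : Finset α),
      ∑ i ∈ U, f i = ∑ i, if i ∈ U then f i else 0 := by
    intro U _; rw [Finset.sum_ite_mem, Finset.univ_inter]
  rw [Finset.sum_congr rfl key, Finset.sum_comm]
  rw [Finset.mul_sum]
  refine Finset.sum_congr rfl fun i _ => ?_
  rw [← Finset.sum_filter, Finset.sum_const, nsmul_eq_mul]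
  congr 1
  have := count_supersets (Finset.univ : Finset α) {i} (Finset.subset_univ _)
    (by simpa using hl)
  simp only [Finset.card_singleton, Finset.singleton_subset_iff, Finset.card_univ] at this
  exact_mod_cast this

lemma sum_over_subsets_pair {α : Type*} [Fintype α] [DecidableEq α] {l : ℕ} (hl : 2 ≤ l)
    (f : α → α → ℝ) :
    ∑ U ∈ Finset.powersetCard l (Finset.univ : Finset α), ∑ i ∈ U, ∑ j ∈ U, f i j
      = ((Fintype.card α - 1).choose (l - 1) : ℝ) * ∑ i, f i i
        + ((Fintype.card α - 2).choose (l - 2) : ℝ) * ∑ i, ∑ j ∈ Finset.univ \ {i}, f i j := by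
  have key : ∀ U ∈ Finset.powersetCard l (Finset.univ : Finset α),
      ∑ i ∈ U, ∑ j ∈ U, f i j = ∑ i, ∑ j, if i ∈ U ∧ j ∈ U then f i j else 0 := by
    intro U _
    trans ∑ i, if i ∈ U then ∑ j, if j ∈ U then f i j else 0 else 0
    · rw [Finset.sum_ite_mem, Finset.univ_inter]
      exact Finset.sum_congr rfl fun i _ => by rw [Finset.sum_ite_mem, Finset.univ_inter]
    · refine Finset.sum_congr rfl fun i _ => ?_
      by_cases hi : i ∈ U <;> simp [hi]
  rw [Finset.sum_congr rfl key, Finset.sum_comm]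
  have inner : ∀ i : α, ∑ U ∈ Finset.powersetCard l (Finset.univ : Finset α),
      ∑ j, (if i ∈ U ∧ j ∈ U then f i j else 0)
      = ((Fintype.card α - 1).choose (l - 1) : ℝ) * f i i
        + ((Fintype.card α - 2).choose (l - 2) : ℝ) * ∑ j ∈ Finset.univ \ {i}, f i j := by
    intro i
    rw [Finset.sum_comm]
    have cnt : ∀ j : α, ∑ U ∈ Finset.powersetCard l (Finset.univ : Finset α),
        (if i ∈ U ∧ j ∈ U then f i j else 0)
        = (((Finset.powersetCard l (Finset.univ : Finset α)).filter
            (fun U => i ∈ U ∧ j ∈ U)).card : ℝ) * f i j := by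
      intro j
      rw [← Finset.sum_filter, Finset.sum_const, nsmul_eq_mul]
    rw [Finset.sum_congr rfl fun j _ => cnt j]
    have cdiag : (((Finset.powersetCard l (Finset.univ : Finset α)).filter
        (fun U => i ∈ U ∧ i ∈ U)).card : ℝ) = ((Fintype.card α - 1).choose (l - 1) : ℝ) := by
      have h1 := count_supersets (Finset.univ : Finset α) {i} (Finset.subset_univ _)
        (by simpa using (by omega : 1 ≤ l))
      simp only [Finset.card_singleton, Finset.singleton_subset_iff, Finset.card_univ] at h1
      rw [← h1]
      norm_cast
      congr 1
      exact Finset.filter_congr fun U _ => by simp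
    have coff : ∀ j : α, j ≠ i → (((Finset.powersetCard l (Finset.univ : Finset α)).filter
        (fun U => i ∈ U ∧ j ∈ U)).card : ℝ) = ((Fintype.card α - 2).choose (l - 2) : ℝ) := by
      intro j hj
      have hcard : ({i, j} : Finset α).card = 2 := Finset.card_pair (Ne.symm hj)
      have h2 := count_supersets (l := l) (Finset.univ : Finset α) {i, j}
        (Finset.subset_univ _) (by rw [hcard]; exact hl)
      rw [hcard, Finset.card_univ] at h2
      rw [← h2]
      norm_cast
      congr 1
      exact Finset.filter_congr fun U _ => by simp [Finset.insert_subset_iff]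
    rw [← Finset.sum_erase_add _ _ (Finset.mem_univ i), cdiag, Finset.erase_eq]
    rw [add_comm, Finset.mul_sum]
    congr 1
    refine Finset.sum_congr rfl fun j hj => ?_
    rw [coff j (by simpa [Finset.erase_eq] using hj)]
  rw [Finset.sum_congr rfl fun i _ => inner i, Finset.sum_add_distrib,
    ← Finset.mul_sum, ← Finset.mul_sum]

lemma markov_count {β : Type*} (P : Finset β) (g : β → ℝ) (hg : ∀ U ∈ P, 0 ≤ g U)
    (t : ℝ) :
    ((P.filter (fun U => t ≤ g U)).card : ℝ) * t ≤ ∑ U ∈ P, g U := by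
  calc ((P.filter (fun U => t ≤ g U)).card : ℝ) * t
      = ∑ _U ∈ P.filter (fun U => t ≤ g U), t := by
        rw [Finset.sum_const, nsmul_eq_mul]
    _ ≤ ∑ U ∈ P.filter (fun U => t ≤ g U), g U :=
        Finset.sum_le_sum fun U hU => (Finset.mem_filter.mp hU).2
    _ ≤ ∑ U ∈ P, g U :=
        Finset.sum_le_sum_of_subset_of_nonneg (Finset.filter_subset _ _)
          (fun U hU _ => hg U hU)

/-- Lemma 6.4(2) (lem_sumpi) with explicit constants: if `‖p‖₂² ≤ u` and
`l ≥ 100·u·n`, then the fraction of `l`-element subsets `U` of `Fin n` with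
`∑ i ∈ U, p i ≥ l/(2n)` and `‖p_{|U}‖₂² = (∑_{i∈U} p i²)/(∑_{i∈U} p i)² ≤ 400·u·n/l`
is at least `0.95`. -/
theorem conditional_l2_bound (n l : ℕ) (hn : 1 ≤ n) (hl1 : 1 ≤ l) (hln : l ≤ n)
    (p : Fin n → ℝ) (hp0 : ∀ i, 0 ≤ p i) (hp1 : ∑ i, p i = 1)
    (u : ℝ) (hu0 : 0 < u) (hu : ∑ i, (p i) ^ 2 ≤ u) (hl : (100 : ℝ) * u * n ≤ (l : ℝ)) :
    (0.95 : ℝ) ≤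
      (((Finset.powersetCard l (Finset.univ : Finset (Fin n))).filter
          (fun U => (l : ℝ) / (2 * n) ≤ ∑ i ∈ U, p i ∧
            (∑ i ∈ U, (p i) ^ 2) / (∑ i ∈ U, p i) ^ 2 ≤ 400 * u * n / l)).card : ℝ) /
        (Nat.choose n l : ℝ) := by
  set P := Finset.powersetCard l (Finset.univ : Finset (Fin n)) with hP
  have hnR : (0 : ℝ) < n := by positivity
  have hlR : (0 : ℝ) < l := by positivity
  have hNR : (0 : ℝ) < (n.choose l : ℝ) := by
    exact_mod_cast Nat.choose_pos hln
  set s2 := ∑ i, (p i) ^ 2 with hs2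
  have hs2nonneg : 0 ≤ s2 := Finset.sum_nonneg fun i _ => sq_nonneg _
  -- Cauchy–Schwarz lower bound: 1 ≤ n * s2
  have hCS : (1 : ℝ) ≤ n * s2 := by
    have := sq_sum_le_card_mul_sum_sq (s := (Finset.univ : Finset (Fin n))) (f := p)
    rw [hp1] at this
    simpa [Finset.card_univ] using this
  -- p i ≤ 1, hence s2 ≤ 1
  have hple : ∀ i, p i ≤ 1 := by
    intro i
    rw [← hp1]
    exact Finset.single_le_sum (fun j _ => hp0 j) (Finset.mem_univ i)
  have hs2le1 : s2 ≤ 1 := by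
    rw [← hp1]
    exact Finset.sum_le_sum fun i _ => by nlinarith [hp0 i, hple i]
  -- l ≥ 100 (so in particular l ≥ 2 and n ≥ 2)
  have hun : (1 : ℝ) ≤ u * n := by nlinarith
  have h100l : (100 : ℝ) ≤ l := by nlinarith
  have hl2 : 2 ≤ l := by exact_mod_cast (by linarith : (2:ℝ) ≤ l)
  have hn2 : 2 ≤ n := le_trans hl2 hln
  -- choose identities
  have hN1 : ((n : ℝ)) * ((n - 1).choose (l - 1) : ℝ) = (l : ℝ) * (n.choose l : ℝ) := by
    have h := Nat.add_one_mul_choose_eq (n - 1) (l - 1)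
    have h1 : n - 1 + 1 = n := by omega
    have h2 : l - 1 + 1 = l := by omega
    rw [h1, h2] at h
    exact_mod_cast by rw [h]; ring
  have hN2 : ((n : ℝ) - 1) * ((n - 2).choose (l - 2) : ℝ)
      = ((l : ℝ) - 1) * ((n - 1).choose (l - 1) : ℝ) := by
    have h := Nat.add_one_mul_choose_eq (n - 2) (l - 2)
    have h1 : n - 2 + 1 = n - 1 := by omega
    have h2 : l - 2 + 1 = l - 1 := by omega
    rw [h1, h2] at h
    have hcast : (((n - 1 : ℕ)) : ℝ) * ((n - 2).choose (l - 2) : ℝ)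
        = ((n - 1).choose (l - 1) : ℝ) * (((l - 1 : ℕ)) : ℝ) := by exact_mod_cast h
    rw [Nat.cast_sub (by omega : 1 ≤ n), Nat.cast_sub (by omega : 1 ≤ l)] at hcast
    push_cast at hcast
    linarith [hcast]
  set N1 : ℝ := ((n - 1).choose (l - 1) : ℝ) with hN1def
  set N2 : ℝ := ((n - 2).choose (l - 2) : ℝ) with hN2def
  set N : ℝ := (n.choose l : ℝ) with hNdef
  have hN1eq : N1 = (l : ℝ) / n * N := by
    field_simp
    linarith [hN1]
  have hN2nonneg : 0 ≤ N2 := Nat.cast_nonneg _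
  have hN2le : N2 ≤ (l : ℝ)^2 / (n : ℝ)^2 * N := by
    have hn1 : (0:ℝ) < (n:ℝ) - 1 := by
      have : (2:ℝ) ≤ n := by exact_mod_cast hn2
      linarith
    have hN2eq : N2 = ((l:ℝ) - 1) * (l:ℝ) / (((n:ℝ) - 1) * n) * N := by
      field_simp
      nlinarith [hN2, hN1]
    rw [hN2eq]
    rw [div_mul_eq_mul_div, div_mul_eq_mul_div, div_le_div_iff₀ (by positivity) (by positivity)]
    have hlleRn : (l : ℝ) ≤ n := by exact_mod_cast hln
    nlinarith [hNR.le, hlR, mul_nonneg (mul_nonneg (mul_nonneg hlR.le hNR.le) hnR.le)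
      (sub_nonneg.mpr hlleRn)]
  -- sums
  have hsumS : ∑ U ∈ P, ∑ i ∈ U, p i = N1 := by
    rw [hP, sum_over_subsets hl1 p, hp1]
    simp [hN1def, Fintype.card_fin]
  have hsumQ : ∑ U ∈ P, ∑ i ∈ U, (p i)^2 = N1 * s2 := by
    rw [hP, sum_over_subsets hl1 (fun i => (p i)^2)]
    simp [hN1def, hs2, Fintype.card_fin]
  have hsumS2 : ∑ U ∈ P, (∑ i ∈ U, p i)^2 = N1 * s2 + N2 * (1 - s2) := by
    have hexp : ∀ U : Finset (Fin n), (∑ i ∈ U, p i)^2 = ∑ i ∈ U, ∑ j ∈ U, p i * p j := by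
      intro U
      rw [sq, Finset.sum_mul_sum]
    rw [Finset.sum_congr rfl fun U _ => hexp U, hP,
      sum_over_subsets_pair hl2 (fun i j => p i * p j)]
    have hdiag : ∑ i, p i * p i = s2 := by
      simp [hs2, sq]
    have hoff : ∑ i : Fin n, ∑ j ∈ Finset.univ \ {i}, p i * p j = 1 - s2 := by
      have : ∀ i : Fin n, ∑ j ∈ Finset.univ \ {i}, p i * p j = p i * (1 - p i) := by
        intro i
        rw [← Finset.mul_sum]
        congr 1
        have := Finset.sum_erase_add Finset.univ p (Finset.mem_univ i)
        rw [Finset.erase_eq] at this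
        linarith [hp1 ▸ this]
      rw [Finset.sum_congr rfl fun i _ => this i]
      have : ∑ i, p i * (1 - p i) = ∑ i, (p i - (p i)^2) := by
        refine Finset.sum_congr rfl fun i _ => by ring
      rw [this, Finset.sum_sub_distrib, hp1, ← hs2]
    rw [hdiag, hoff]
    simp [hN1def, hN2def, Fintype.card_fin]
  -- variance bound
  have hvar : ∑ U ∈ P, (∑ i ∈ U, p i - (l : ℝ)/n)^2 ≤ N * u * l / n := by
    have hexp : ∑ U ∈ P, (∑ i ∈ U, p i - (l : ℝ)/n)^2
        = (∑ U ∈ P, (∑ i ∈ U, p i)^2) - 2*((l:ℝ)/n) * (∑ U ∈ P, ∑ i ∈ U, p i)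
          + (P.card : ℝ) * ((l:ℝ)/n)^2 := by
      have : ∀ U : Finset (Fin n), (∑ i ∈ U, p i - (l : ℝ)/n)^2
          = (∑ i ∈ U, p i)^2 - 2*((l:ℝ)/n) * (∑ i ∈ U, p i) + ((l:ℝ)/n)^2 := by
        intro U; ring
      rw [Finset.sum_congr rfl fun U _ => this U, Finset.sum_add_distrib,
        Finset.sum_sub_distrib, ← Finset.mul_sum, Finset.sum_const, nsmul_eq_mul]
    have hcardP : (P.card : ℝ) = N := by
      rw [hP, Finset.card_powersetCard, Finset.card_univ, Fintype.card_fin, hNdef]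
    rw [hexp, hsumS2, hsumS, hcardP, hN1eq]
    have hs2u : s2 ≤ u := hu
    have key : (l:ℝ)/n * N * s2 + N2 * (1 - s2) - 2*((l:ℝ)/n) * ((l:ℝ)/n * N)
        + N * ((l:ℝ)/n)^2 ≤ N * u * l / n := by
      have h1 : N2 * (1 - s2) ≤ (l : ℝ)^2 / (n : ℝ)^2 * N * (1 - s2) := by
        nlinarith [hN2le, hs2le1]
      have h2 : (l:ℝ)/n * N * s2 ≤ (l:ℝ)/n * N * u := by
        have : 0 ≤ (l:ℝ)/n * N := by positivity
        nlinarith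
      have hid : 2*((l:ℝ)/n) * ((l:ℝ)/n * N) - N * ((l:ℝ)/n)^2
          = (l : ℝ)^2 / (n : ℝ)^2 * N := by
        field_simp; ring
      have hfin : (l:ℝ)/n * N * u = N * u * l / n := by ring
      nlinarith [mul_nonneg (mul_nonneg (div_nonneg (Nat.cast_nonneg l) hnR.le) hNR.le)
        hs2nonneg, sq_nonneg ((l:ℝ)/n),
        mul_nonneg (mul_nonneg (div_nonneg (sq_nonneg (l:ℝ)) (sq_nonneg (n:ℝ))) hNR.le)
          hs2nonneg]
    linarith [key]
  -- Markov bounds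
  set cond : Finset (Fin n) → Prop := fun U => (l : ℝ) / (2 * n) ≤ ∑ i ∈ U, p i ∧
      (∑ i ∈ U, (p i) ^ 2) / (∑ i ∈ U, p i) ^ 2 ≤ 400 * u * n / l with hcond
  set B1 := P.filter (fun U => ((l:ℝ)/(2*n))^2 ≤ (∑ i ∈ U, p i - (l:ℝ)/n)^2) with hB1def
  set B2 := P.filter (fun U => 100*u*(l:ℝ)/n ≤ ∑ i ∈ U, (p i)^2) with hB2def
  have hB1 : (B1.card : ℝ) ≤ 0.04 * N := by
    have hM := markov_count P (fun U => (∑ i ∈ U, p i - (l:ℝ)/n)^2)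
      (fun U _ => sq_nonneg _) (((l:ℝ)/(2*n))^2)
    have hc2 : (0:ℝ) < ((l:ℝ)/(2*n))^2 := by positivity
    rw [← mul_le_mul_iff_of_pos_right hc2]
    have hstep : N * u * (l:ℝ) / n ≤ 0.04 * N * (((l:ℝ)/(2*n))^2) := by
      have heq : 0.04 * N * (((l:ℝ)/(2*n))^2) = N * (l:ℝ)^2 / (100 * (n:ℝ)^2) := by
        field_simp; ring
      rw [heq, div_le_div_iff₀ (by positivity) (by positivity)]
      nlinarith [mul_le_mul_of_nonneg_left hl
        (by positivity : (0:ℝ) ≤ N * l * n)]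
    calc (B1.card : ℝ) * (((l:ℝ)/(2*n))^2)
        ≤ ∑ U ∈ P, (∑ i ∈ U, p i - (l:ℝ)/n)^2 := hM
      _ ≤ N * u * (l:ℝ) / n := hvar
      _ ≤ 0.04 * N * (((l:ℝ)/(2*n))^2) := hstep
  have hB2 : (B2.card : ℝ) ≤ 0.01 * N := by
    have hM := markov_count P (fun U => ∑ i ∈ U, (p i)^2)
      (fun U _ => Finset.sum_nonneg fun i _ => sq_nonneg _) (100*u*(l:ℝ)/n)
    have ht : (0:ℝ) < 100*u*(l:ℝ)/n := by positivity
    rw [← mul_le_mul_iff_of_pos_right ht]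
    calc (B2.card : ℝ) * (100*u*(l:ℝ)/n)
        ≤ ∑ U ∈ P, ∑ i ∈ U, (p i)^2 := hM
      _ = N1 * s2 := hsumQ
      _ ≤ ((l:ℝ)/n * N) * u := by
          rw [hN1eq]
          have hpos : (0:ℝ) ≤ (l:ℝ)/n * N := by positivity
          nlinarith
      _ = 0.01 * N * (100*u*(l:ℝ)/n) := by field_simp; ring
  -- coverage: U failing the condition lies in B1 ∪ B2
  have hcover : P.filter (fun U => ¬ cond U) ⊆ B1 ∪ B2 := by
    intro U hU
    rw [Finset.mem_filter] at hU
    obtain ⟨hUP, hUc⟩ := hU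
    set S := ∑ i ∈ U, p i with hS
    have hS0 : 0 ≤ S := Finset.sum_nonneg fun i _ => hp0 i
    by_cases hA : (l:ℝ)/(2*n) ≤ S
    · -- first condition holds, so the second must fail: U ∈ B2
      have h2 : ¬ ((∑ i ∈ U, (p i) ^ 2) / S ^ 2 ≤ 400 * u * n / l) := by
        intro hB
        exact hUc ⟨hA, hB⟩
      push_neg at h2
      apply Finset.mem_union_right
      rw [hB2def, Finset.mem_filter]
      refine ⟨hUP, ?_⟩
      have hSpos : 0 < S := lt_of_lt_of_le (by positivity) hA
      have hS2pos : 0 < S^2 := by positivity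
      have hQ : 400 * u * (n:ℝ) / l * S^2 < ∑ i ∈ U, (p i)^2 := by
        have := (lt_div_iff₀ hS2pos).mp h2
        linarith
      have hS2ge : ((l:ℝ)/(2*n))^2 ≤ S^2 := pow_le_pow_left₀ (by positivity) hA 2
      have hcpos : (0:ℝ) < 400 * u * (n:ℝ) / l := by positivity
      have hmono : 400 * u * (n:ℝ) / l * (((l:ℝ)/(2*n))^2) ≤ 400 * u * (n:ℝ) / l * S^2 :=
        mul_le_mul_of_nonneg_left hS2ge hcpos.le
      have hval : 400 * u * (n:ℝ) / l * (((l:ℝ)/(2*n))^2) = 100*u*(l:ℝ)/n := by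
        field_simp; ring
      linarith
    · push_neg at hA
      apply Finset.mem_union_left
      rw [hB1def, Finset.mem_filter]
      refine ⟨hUP, ?_⟩
      have hln2 : (l:ℝ)/(2*n) + (l:ℝ)/(2*n) = (l:ℝ)/n := by field_simp; ring
      nlinarith [hA, hS0]
  -- final counting
  have hPcard : (P.card : ℝ) = N := by
    rw [hP, Finset.card_powersetCard, Finset.card_univ, Fintype.card_fin, hNdef]
  have hbadle : ((P.filter (fun U => ¬ cond U)).card : ℝ) ≤ 0.05 * N := by
    calc ((P.filter (fun U => ¬ cond U)).card : ℝ)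
        ≤ ((B1 ∪ B2).card : ℝ) := by exact_mod_cast Finset.card_le_card hcover
      _ ≤ (B1.card : ℝ) + (B2.card : ℝ) := by exact_mod_cast Finset.card_union_le _ _
      _ ≤ 0.05 * N := by linarith
  have hsplit : ((P.filter cond).card : ℝ)
      + ((P.filter (fun U => ¬ cond U)).card : ℝ) = N := by
    rw [← hPcard]
    exact_mod_cast Finset.card_filter_add_card_filter_not (s := P) (p := cond)
  rw [le_div_iff₀ hNR]
  linarith
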